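/- For every positive integer k, k! ≤ √(2πk) · (k/e)^k · e^{1/(12k)}. -/
import Mathlib


open Real Filter Topology

open scoped Nat

namespace RobbinsAux

open Stirling

lemma diff_le_third_geo (n : ℕ) :
    Real.log (stirlingSeq (n + 1)) - Real.log (stirlingSeq (n + 2)) ≤
      (1 / 3 : ℝ) *
        (((1 : ℝ) / (2 * ↑(n + 1) + 1)) ^ 2 / (1 - ((1 : ℝ) / (2 * ↑(n + 1) + 1)) ^ 2)) := by
  have h_nonneg : (0 : ℝ) ≤ ((1 : ℝ) / (2 * ↑(n + 1) + 1)) ^ 2 := sq_nonneg _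
  have g : HasSum (fun k : ℕ => (((1 : ℝ) / (2 * ↑(n + 1) + 1)) ^ 2) ^ (k + 1))
      (((1 : ℝ) / (2 * ↑(n + 1) + 1)) ^ 2 / (1 - ((1 : ℝ) / (2 * ↑(n + 1) + 1)) ^ 2)) := by
    have := (hasSum_geometric_of_lt_one h_nonneg ?_).mul_left (((1 : ℝ) / (2 * ↑(n + 1) + 1)) ^ 2)
    · simp_rw [← _root_.pow_succ'] at this
      exact this
    rw [one_div, inv_pow]
    exact inv_lt_one_of_one_lt₀ (one_lt_pow₀ (lt_add_of_pos_left _ <| by positivity) two_ne_zero)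
  have hab (k : ℕ) : (1 : ℝ) / (2 * ↑(k + 1) + 1) * ((1 / (2 * ↑(n + 1) + 1)) ^ 2) ^ (k + 1) ≤
      (1 / 3 : ℝ) * (((1 : ℝ) / (2 * ↑(n + 1) + 1)) ^ 2) ^ (k + 1) := by
    have h3 : (1 : ℝ) / (2 * ↑(k + 1) + 1) ≤ 1 / 3 := by
      apply div_le_div_of_nonneg_left (by norm_num) (by norm_num)
      push_cast; linarith [Nat.cast_nonneg (α := ℝ) k]
    exact mul_le_mul_of_nonneg_right h3 (pow_nonneg h_nonneg _)
  exact hasSum_le hab (log_stirlingSeq_diff_hasSum n) (g.mul_left _)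

lemma diff_le (n : ℕ) :
    Real.log (stirlingSeq (n + 1)) - Real.log (stirlingSeq (n + 2)) ≤
      1 / (12 * (↑(n + 1) : ℝ)) - 1 / (12 * (↑(n + 2) : ℝ)) := by
  refine (diff_le_third_geo n).trans_eq ?_
  have hm : (0 : ℝ) < (n : ℝ) + 1 := by positivity
  have h1 : (0 : ℝ) < 2 * ((n : ℝ) + 1) + 1 := by positivity
  push_cast
  rw [div_pow, one_pow]
  have h2 : (1 : ℝ) - 1 / (2 * ((n : ℝ) + 1) + 1) ^ 2
      = (4 * ((n : ℝ) + 1) * ((n : ℝ) + 2)) / (2 * ((n : ℝ) + 1) + 1) ^ 2 := by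
    field_simp
    ring
  rw [h2]
  field_simp
  ring

lemma key (n : ℕ) :
    Real.log (stirlingSeq (n + 1)) - 1 / (12 * ((n : ℝ) + 1)) ≤ Real.log (Real.sqrt Real.pi) := by
  set b : ℕ → ℝ := fun m => Real.log (stirlingSeq (m + 1)) - 1 / (12 * ((m : ℝ) + 1)) with hb
  have hmono : Monotone b := monotone_nat_of_le_succ fun m => by
    have h := diff_le m
    push_cast at h
    simp only [hb, Nat.cast_add, Nat.cast_one]
    have e2 : ((m : ℝ) + 1 + 1) = (m : ℝ) + 2 := by ring
    rw [e2]
    linarith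
  have htend : Tendsto b atTop (𝓝 (Real.log (Real.sqrt Real.pi))) := by
    have h1 : Tendsto (fun m : ℕ => Real.log (stirlingSeq (m + 1))) atTop
        (𝓝 (Real.log (Real.sqrt Real.pi))) := by
      have := tendsto_stirlingSeq_sqrt_pi.comp (tendsto_add_atTop_nat 1)
      exact (Real.continuousAt_log (by positivity)).tendsto.comp this
    have h2 : Tendsto (fun m : ℕ => 1 / (12 * ((m : ℝ) + 1))) atTop (𝓝 0) := by
      have h3 := tendsto_one_div_add_atTop_nhds_zero_nat.const_mul (1 / 12 : ℝ)
      rw [mul_zero] at h3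
      convert h3 using 2 with m
      field_simp
    simpa [hb] using h1.sub h2
  exact hmono.ge_of_tendsto htend n

end RobbinsAux

theorem factorial_le_robbins (k : ℕ) (hk : 1 ≤ k) :
    (Nat.factorial k : ℝ) ≤
      Real.sqrt (2 * Real.pi * k) * ((k : ℝ) / Real.exp 1) ^ k *
        Real.exp (1 / (12 * k)) := by
  obtain ⟨n, rfl⟩ := Nat.exists_eq_succ_of_ne_zero (by omega : k ≠ 0)
  have hpos : 0 < Stirling.stirlingSeq (n + 1) := Stirling.stirlingSeq'_pos n
  have hkey := RobbinsAux.key n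
  have hc : (↑(n + 1) : ℝ) = (n : ℝ) + 1 := by push_cast; ring
  rw [← hc] at hkey
  have hle : Stirling.stirlingSeq (n + 1) ≤
      Real.sqrt Real.pi * Real.exp (1 / (12 * (↑(n + 1) : ℝ))) := by
    have := Real.exp_le_exp.mpr (by linarith :
      Real.log (Stirling.stirlingSeq (n + 1)) ≤
        Real.log (Real.sqrt Real.pi) + 1 / (12 * (↑(n + 1) : ℝ)))
    rwa [Real.exp_log hpos, Real.exp_add, Real.exp_log (by positivity)] at this
  have hfac : (Nat.factorial (n + 1) : ℝ) =
      Stirling.stirlingSeq (n + 1) *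
        (Real.sqrt (2 * (↑(n + 1) : ℝ)) * ((↑(n + 1) : ℝ) / Real.exp 1) ^ (n + 1)) := by
    rw [Stirling.stirlingSeq, div_mul_cancel₀]
    positivity
  have hsq : Real.sqrt Real.pi * Real.sqrt (2 * (↑(n + 1) : ℝ)) =
      Real.sqrt (2 * Real.pi * (↑(n + 1) : ℝ)) := by
    rw [← Real.sqrt_mul Real.pi_pos.le]
    ring_nf
  calc (Nat.factorial (n + 1) : ℝ)
      = Stirling.stirlingSeq (n + 1) *
        (Real.sqrt (2 * (↑(n + 1) : ℝ)) * ((↑(n + 1) : ℝ) / Real.exp 1) ^ (n + 1)) := hfac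
    _ ≤ (Real.sqrt Real.pi * Real.exp (1 / (12 * (↑(n + 1) : ℝ)))) *
        (Real.sqrt (2 * (↑(n + 1) : ℝ)) * ((↑(n + 1) : ℝ) / Real.exp 1) ^ (n + 1)) := by
        apply mul_le_mul_of_nonneg_right hle
        positivity
    _ = Real.sqrt (2 * Real.pi * (↑(n + 1) : ℝ)) * ((↑(n + 1) : ℝ) / Real.exp 1) ^ (n + 1) *
        Real.exp (1 / (12 * (↑(n + 1) : ℝ))) := by rw [← hsq]; ring
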